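/- Let a > 0, D > 0 and t > 0. Then the integral over the region {y ∈ ℝ³ : ‖y‖ ≥ a} of the function y ↦ (a/‖y‖)·erfc((‖y‖ − a)/√(4Dt)) with respect to Lebesgue measure equals 4πDat + 8a²√(πDt). -/

import Mathlib

open MeasureTheory Filter Set Real Topology

noncomputable def erf (x : ℝ) : ℝ :=
  (2 / Real.sqrt Real.pi) * ∫ u in (0:ℝ)..x, Real.exp (-u ^ 2)

noncomputable def erfc (x : ℝ) : ℝ := 1 - erf x

lemma sqrt_pi_pos : 0 < Real.sqrt Real.pi := Real.sqrt_pos.mpr Real.pi_pos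

lemma cont_gauss : Continuous fun u : ℝ => Real.exp (-u ^ 2) :=
  Real.continuous_exp.comp (continuous_pow 2).neg

lemma gauss_integrableOn (x : ℝ) : IntegrableOn (fun u : ℝ => Real.exp (-u ^ 2)) (Ioi x) := by
  have := (integrable_exp_neg_mul_sq (one_pos)).integrableOn (s := Ioi x)
  simpa using this

lemma gauss_integral_Ioi_zero : ∫ u in Ioi (0:ℝ), Real.exp (-u ^ 2) = Real.sqrt Real.pi / 2 := by
  have := integral_gaussian_Ioi 1
  simpa using this

lemma hasDerivAt_erf (x : ℝ) :
    HasDerivAt erf (2 / Real.sqrt Real.pi * Real.exp (-x ^ 2)) x := by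
  have h := (cont_gauss.integral_hasStrictDerivAt 0 x).hasDerivAt
  exact h.const_mul (2 / Real.sqrt Real.pi)

lemma erf_zero : erf 0 = 0 := by simp [erf]

lemma erf_tendsto : Tendsto erf atTop (𝓝 1) := by
  have h := intervalIntegral_tendsto_integral_Ioi 0 (gauss_integrableOn 0) tendsto_id
  have h2 : Tendsto erf atTop (𝓝 (2 / Real.sqrt Real.pi * (Real.sqrt Real.pi / 2))) := by
    rw [gauss_integral_Ioi_zero] at h
    exact h.const_mul _
  convert h2 using 2
  field_simp

lemma erfc_eq {x : ℝ} (hx : 0 ≤ x) :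
    erfc x = (2 / Real.sqrt Real.pi) * ∫ u in Ioi x, Real.exp (-u ^ 2) := by
  have hsplit : (∫ u in Ioc 0 x, Real.exp (-u ^ 2)) + ∫ u in Ioi x, Real.exp (-u ^ 2)
      = ∫ u in Ioi (0:ℝ), Real.exp (-u ^ 2) := by
    rw [← setIntegral_union (Ioc_disjoint_Ioi le_rfl) measurableSet_Ioi
      ((gauss_integrableOn 0).mono_set Ioc_subset_Ioi_self) (gauss_integrableOn x),
      Ioc_union_Ioi_eq_Ioi hx]
  have h1 : erf x = (2 / Real.sqrt Real.pi) * ∫ u in Ioc 0 x, Real.exp (-u ^ 2) := by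
    rw [erf, intervalIntegral.integral_of_le hx]
  have hone : (1 : ℝ) = (2 / Real.sqrt Real.pi) * ∫ u in Ioi (0:ℝ), Real.exp (-u ^ 2) := by
    rw [gauss_integral_Ioi_zero]; field_simp
  rw [erfc, h1, hone, ← hsplit]; ring

lemma erfc_nonneg {x : ℝ} (hx : 0 ≤ x) : 0 ≤ erfc x := by
  rw [erfc_eq hx]
  have : 0 ≤ ∫ u in Ioi x, Real.exp (-u ^ 2) :=
    setIntegral_nonneg measurableSet_Ioi fun u _ => (Real.exp_pos _).le
  positivity

lemma hasDerivAt_gauss (x : ℝ) :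
    HasDerivAt (fun u : ℝ => Real.exp (-u ^ 2)) (-2 * x * Real.exp (-x ^ 2)) x := by
  have h : HasDerivAt (fun u : ℝ => Real.exp (-u ^ 2)) _ x := ((hasDerivAt_pow 2 x).neg).exp
  convert h using 1; simp only [Pi.neg_apply]; ring

lemma tendsto_gauss : Tendsto (fun u : ℝ => Real.exp (-u ^ 2)) atTop (𝓝 0) := by
  have h1 : Tendsto (fun u : ℝ => u ^ 2) atTop atTop := tendsto_pow_atTop two_ne_zero
  exact Real.tendsto_exp_neg_atTop_nhds_zero.comp h1

lemma mul_gauss_integral {x : ℝ} (hx : 0 ≤ x) :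
    (∫ u in Ioi x, u * Real.exp (-u ^ 2)) = Real.exp (-x ^ 2) / 2 ∧
      IntegrableOn (fun u : ℝ => u * Real.exp (-u ^ 2)) (Ioi x) := by
  have hderiv : ∀ u ∈ Ici x, HasDerivAt (fun u : ℝ => -Real.exp (-u ^ 2) / 2)
      (u * Real.exp (-u ^ 2)) u := by
    intro u _
    have h : HasDerivAt (fun u : ℝ => -Real.exp (-u ^ 2) / 2) _ u := (hasDerivAt_gauss u).neg.div_const 2
    convert h using 1; ring
  have hpos : ∀ u ∈ Ioi x, 0 ≤ u * Real.exp (-u ^ 2) := fun u hu =>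
    mul_nonneg (hx.trans (le_of_lt hu)) (Real.exp_pos _).le
  have htend : Tendsto (fun u : ℝ => -Real.exp (-u ^ 2) / 2) atTop (𝓝 0) := by
    have := (tendsto_gauss.neg).div_const 2
    simpa using this
  constructor
  · have := integral_Ioi_of_hasDerivAt_of_nonneg' hderiv hpos htend
    rw [this]; ring
  · exact integrableOn_Ioi_deriv_of_nonneg' hderiv hpos htend


lemma erfc_le {x : ℝ} (hx : 1 ≤ x) :
    erfc x ≤ Real.exp (-x ^ 2) / Real.sqrt Real.pi := by
  have h0 : (0:ℝ) ≤ x := le_trans zero_le_one hx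
  have hmono : (∫ u in Ioi x, Real.exp (-u ^ 2)) ≤ ∫ u in Ioi x, u * Real.exp (-u ^ 2) := by
    refine setIntegral_mono_on (gauss_integrableOn x) (mul_gauss_integral h0).2
      measurableSet_Ioi fun u hu => ?_
    have h1 : 1 ≤ u := hx.trans (le_of_lt hu)
    nlinarith [Real.exp_pos (-u ^ 2)]
  rw [erfc_eq h0]
  calc 2 / Real.sqrt Real.pi * ∫ u in Ioi x, Real.exp (-u ^ 2)
      ≤ 2 / Real.sqrt Real.pi * ∫ u in Ioi x, u * Real.exp (-u ^ 2) := by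
        apply mul_le_mul_of_nonneg_left hmono; positivity
    _ = Real.exp (-x ^ 2) / Real.sqrt Real.pi := by
        rw [(mul_gauss_integral h0).1]; field_simp

lemma tendsto_pow_mul_gauss (n : ℕ) :
    Tendsto (fun x : ℝ => x ^ n * Real.exp (-x ^ 2)) atTop (𝓝 0) := by
  have hup : Tendsto (fun x : ℝ => x ^ n * Real.exp (-x)) atTop (𝓝 0) :=
    tendsto_pow_mul_exp_neg_atTop_nhds_zero n
  refine tendsto_of_tendsto_of_tendsto_of_le_of_le' tendsto_const_nhds hup ?_ ?_
  · filter_upwards [eventually_ge_atTop (0:ℝ)] with x hx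
    positivity
  · filter_upwards [eventually_ge_atTop (1:ℝ)] with x hx
    have : Real.exp (-x ^ 2) ≤ Real.exp (-x) := by
      apply Real.exp_le_exp.mpr; nlinarith
    have hxn : (0:ℝ) ≤ x ^ n := by positivity
    exact mul_le_mul_of_nonneg_left this hxn

lemma tendsto_pow_mul_erfc (n : ℕ) :
    Tendsto (fun x : ℝ => x ^ n * erfc x) atTop (𝓝 0) := by
  have hup : Tendsto (fun x : ℝ => x ^ n * Real.exp (-x ^ 2) / Real.sqrt Real.pi)
      atTop (𝓝 0) := by
    have := (tendsto_pow_mul_gauss n).div_const (Real.sqrt Real.pi)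
    simpa using this
  refine tendsto_of_tendsto_of_tendsto_of_le_of_le' tendsto_const_nhds hup ?_ ?_
  · filter_upwards [eventually_ge_atTop (1:ℝ)] with x hx
    have := erfc_nonneg (le_trans zero_le_one hx)
    positivity
  · filter_upwards [eventually_ge_atTop (1:ℝ)] with x hx
    have h := erfc_le hx
    have hxn : (0:ℝ) ≤ x ^ n := by positivity
    calc x ^ n * erfc x ≤ x ^ n * (Real.exp (-x ^ 2) / Real.sqrt Real.pi) :=
          mul_le_mul_of_nonneg_left h hxn
      _ = x ^ n * Real.exp (-x ^ 2) / Real.sqrt Real.pi := by ring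

lemma erfc_tendsto : Tendsto erfc atTop (𝓝 0) := by
  have := erf_tendsto.const_sub 1
  simp only [sub_self] at this; exact this

noncomputable def erfF0 (x : ℝ) : ℝ := x * erfc x - Real.exp (-x ^ 2) / Real.sqrt Real.pi

noncomputable def erfG (x : ℝ) : ℝ :=
  x ^ 2 / 2 * erfc x - x * Real.exp (-x ^ 2) / (2 * Real.sqrt Real.pi) + erf x / 4

lemma hasDerivAt_erfc (x : ℝ) :
    HasDerivAt erfc (-(2 / Real.sqrt Real.pi * Real.exp (-x ^ 2))) x :=
  (hasDerivAt_erf x).const_sub 1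

lemma hasDerivAt_erfF0 (x : ℝ) : HasDerivAt erfF0 (erfc x) x := by
  have h1 := (hasDerivAt_id x).mul (hasDerivAt_erfc x)
  have h2 := (hasDerivAt_gauss x).div_const (Real.sqrt Real.pi)
  have h : HasDerivAt erfF0 _ x := h1.sub h2
  convert h using 1
  have hπ : Real.sqrt Real.pi ≠ 0 := ne_of_gt sqrt_pi_pos
  field_simp
  simp only [id_eq]; ring

lemma hasDerivAt_erfG (x : ℝ) : HasDerivAt erfG (x * erfc x) x := by
  have h1 := ((hasDerivAt_pow 2 x).div_const 2).mul (hasDerivAt_erfc x)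
  have h2 := ((hasDerivAt_id x).mul (hasDerivAt_gauss x)).div_const (2 * Real.sqrt Real.pi)
  have h3 := (hasDerivAt_erf x).div_const 4
  have h : HasDerivAt erfG _ x := (h1.sub h2).add h3
  convert h using 1
  have hπ : Real.sqrt Real.pi ≠ 0 := ne_of_gt sqrt_pi_pos
  field_simp
  simp only [id_eq]; ring

lemma erfF0_tendsto : Tendsto erfF0 atTop (𝓝 0) := by
  have h1 : Tendsto (fun x : ℝ => x * erfc x) atTop (𝓝 0) := by
    have := tendsto_pow_mul_erfc 1; simpa using this
  have h2 : Tendsto (fun x : ℝ => Real.exp (-x ^ 2) / Real.sqrt Real.pi) atTop (𝓝 0) := by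
    have := tendsto_gauss.div_const (Real.sqrt Real.pi); simpa using this
  have := h1.sub h2
  simp only [sub_self] at this; exact this

lemma erfG_tendsto : Tendsto erfG atTop (𝓝 (1 / 4)) := by
  have h1 : Tendsto (fun x : ℝ => x ^ 2 / 2 * erfc x) atTop (𝓝 0) := by
    have := (tendsto_pow_mul_erfc 2).div_const 2
    simp only [zero_div] at this
    refine this.congr fun x => by ring
  have h2 : Tendsto (fun x : ℝ => x * Real.exp (-x ^ 2) / (2 * Real.sqrt Real.pi)) atTop (𝓝 0) := by
    have := (tendsto_pow_mul_gauss 1).div_const (2 * Real.sqrt Real.pi)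
    simpa using this
  have h3 : Tendsto (fun x : ℝ => erf x / 4) atTop (𝓝 (1 / 4)) := erf_tendsto.div_const 4
  have := (h1.sub h2).add h3
  simp only [sub_self, zero_add] at this; exact this

lemma erfc_zero : erfc 0 = 1 := by simp [erfc, erf_zero]

lemma erfF0_zero : erfF0 0 = -(1 / Real.sqrt Real.pi) := by
  simp [erfF0, erfc_zero]

lemma erfG_zero : erfG 0 = 0 := by
  simp [erfG, erf_zero]

lemma integral_J {a σ : ℝ} (ha : 0 < a) (hσ : 0 < σ) :
    (∫ r in Ioi a, r * erfc ((r - a) / σ)) = σ ^ 2 / 4 + a * σ / Real.sqrt Real.pi := by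
  set Φ : ℝ → ℝ := fun r => σ ^ 2 * erfG ((r - a) / σ) + a * σ * erfF0 ((r - a) / σ) with hΦdef
  have hz : ∀ r : ℝ, HasDerivAt (fun r : ℝ => (r - a) / σ) (1 / σ) r := by
    intro r
    simpa using ((hasDerivAt_id r).sub_const a).div_const σ
  have hΦ : ∀ r : ℝ, HasDerivAt Φ (r * erfc ((r - a) / σ)) r := by
    intro r
    have hG := ((hasDerivAt_erfG ((r - a) / σ)).comp r (hz r)).const_mul (σ ^ 2)
    have hF := ((hasDerivAt_erfF0 ((r - a) / σ)).comp r (hz r)).const_mul (a * σ)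
    have h : HasDerivAt Φ _ r := hG.add hF
    convert h using 1
    have hσ' : σ ≠ 0 := ne_of_gt hσ
    field_simp
    ring
  have hpos : ∀ r ∈ Ioi a, 0 ≤ r * erfc ((r - a) / σ) := by
    intro r hr
    have hr' : a < r := hr
    have h1 : (0:ℝ) ≤ (r - a) / σ := div_nonneg (by linarith) hσ.le
    exact mul_nonneg (by linarith) (erfc_nonneg h1)
  have htendz : Tendsto (fun r : ℝ => (r - a) / σ) atTop atTop :=
    (tendsto_atTop_add_const_right atTop (-a) tendsto_id).atTop_div_const hσ |>.congr
      fun r => by simp only [id_eq, sub_eq_add_neg]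
  have htend : Tendsto Φ atTop (𝓝 (σ ^ 2 / 4)) := by
    have hG := (erfG_tendsto.comp htendz).const_mul (σ ^ 2)
    have hF := (erfF0_tendsto.comp htendz).const_mul (a * σ)
    have := hG.add hF
    simp only [mul_zero, add_zero, Function.comp_def] at this
    convert this using 2
    ring
  have := integral_Ioi_of_hasDerivAt_of_nonneg' (fun r _ => hΦ r) hpos htend
  rw [this, hΦdef]
  simp only [sub_self, zero_div, erfG_zero, erfF0_zero]
  have hπ : Real.sqrt Real.pi ≠ 0 := ne_of_gt sqrt_pi_pos
  field_simp
  ring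


/-- The integral over `{y ∈ ℝ³ : ‖y‖ ≥ a}` of `(a/‖y‖)·erfc((‖y‖-a)/√(4Dt))`
equals `4πDat + 8a²√(πDt)` (mean Wiener-sausage volume, Lemma 1). -/
theorem mean_sausage_volume (a D t : ℝ) (ha : 0 < a) (hD : 0 < D) (ht : 0 < t) :
    (∫ y in {y : EuclideanSpace ℝ (Fin 3) | a ≤ ‖y‖},
        (a / ‖y‖) * erfc ((‖y‖ - a) / Real.sqrt (4 * D * t)) ∂volume) =
      4 * Real.pi * D * a * t + 8 * a ^ 2 * Real.sqrt (Real.pi * D * t) := by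
  set σ : ℝ := Real.sqrt (4 * D * t) with hσdef
  have hσ : 0 < σ := Real.sqrt_pos.mpr (by positivity)
  set g : ℝ → ℝ := fun r => (a / r) * erfc ((r - a) / σ) with hg
  set F : ℝ → ℝ := Set.indicator (Ici a) g with hF
  have hmeas : MeasurableSet {y : EuclideanSpace ℝ (Fin 3) | a ≤ ‖y‖} :=
    (isClosed_le continuous_const continuous_norm).measurableSet
  have hrewrite : (∫ y in {y : EuclideanSpace ℝ (Fin 3) | a ≤ ‖y‖},
      (a / ‖y‖) * erfc ((‖y‖ - a) / σ) ∂volume)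
      = ∫ y : EuclideanSpace ℝ (Fin 3), F ‖y‖ ∂volume := by
    rw [← integral_indicator hmeas]
    refine integral_congr_ae (Eventually.of_forall fun y => ?_)
    by_cases h : a ≤ ‖y‖ <;> simp [Set.indicator, h, hF, hg]
  rw [hrewrite, integral_fun_norm_addHaar volume F, finrank_euclideanSpace_fin]
  have hball : (volume (Metric.ball (0 : EuclideanSpace ℝ (Fin 3)) 1)).toReal
      = Real.pi * (4 / 3) := by
    rw [EuclideanSpace.volume_ball]
    have hcard : (Fintype.card (Fin 3)) = 3 := Fintype.card_fin 3
    rw [hcard]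
    have hΓ : Real.Gamma ((3:ℕ) / 2 + 1) = 3 / 4 * Real.sqrt Real.pi := by
      push_cast
      rw [Real.Gamma_add_one (by norm_num)]
      have h32 : (3:ℝ) / 2 = 1 / 2 + 1 := by norm_num
      rw [h32, Real.Gamma_add_one (by norm_num), Real.Gamma_one_half_eq]
      ring
    rw [hΓ]
    have hs : Real.sqrt Real.pi ^ 3 = Real.pi * Real.sqrt Real.pi := by
      rw [pow_succ, Real.sq_sqrt Real.pi_pos.le]
    rw [hs]
    have hπ : Real.sqrt Real.pi ≠ 0 := ne_of_gt sqrt_pi_pos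
    rw [ENNReal.toReal_mul, ENNReal.toReal_pow, ENNReal.toReal_ofReal zero_le_one,
      ENNReal.toReal_ofReal (by positivity)]
    field_simp
  rw [measureReal_def, hball]
  have hI : (∫ y in Ioi (0:ℝ), y ^ (3 - 1) • F y)
      = a * ∫ r in Ioi a, r * erfc ((r - a) / σ) := by
    have h1 : ∀ y : ℝ, y ^ (3 - 1) • F y
        = Set.indicator (Ici a) (fun r => r ^ 2 * g r) y := by
      intro y
      by_cases h : y ∈ Ici a <;> simp [hF, Set.indicator, h, smul_eq_mul]
    simp_rw [h1]
    rw [setIntegral_indicator measurableSet_Ici]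
    have h2 : Ioi (0:ℝ) ∩ Ici a = Ici a :=
      inter_eq_self_of_subset_right (fun y hy => lt_of_lt_of_le ha hy)
    rw [h2, integral_Ici_eq_integral_Ioi, ← integral_const_mul]
    apply setIntegral_congr_fun measurableSet_Ioi
    intro y hy
    have hy0 : y ≠ 0 := ne_of_gt (lt_trans ha hy)
    simp only [hg]
    field_simp
  rw [hI, integral_J ha hσ, nsmul_eq_mul, smul_eq_mul]
  have hσsq : σ ^ 2 = 4 * D * t := Real.sq_sqrt (by positivity)
  have hσval : σ = 2 * Real.sqrt (D * t) := by
    rw [hσdef, show (4:ℝ) * D * t = 4 * (D * t) by ring,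
      Real.sqrt_mul (by norm_num : (0:ℝ) ≤ 4),
      show Real.sqrt 4 = 2 by rw [show (4:ℝ) = 2 ^ 2 by norm_num, Real.sqrt_sq (by norm_num)]]
  have hsplit : Real.sqrt (Real.pi * D * t) = Real.sqrt Real.pi * Real.sqrt (D * t) := by
    rw [show Real.pi * D * t = Real.pi * (D * t) by ring, Real.sqrt_mul Real.pi_pos.le]
  rw [hσsq, hσval, hsplit]
  have hππ : Real.sqrt Real.pi ^ 2 = Real.pi := Real.sq_sqrt Real.pi_pos.le
  have hπ : Real.sqrt Real.pi ≠ 0 := ne_of_gt sqrt_pi_pos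
  rw [← hππ]
  field_simp
  linear_combination -
    (24 * a * Real.sqrt (D * t)) * Real.sq_sqrt (sq_nonneg (Real.sqrt Real.pi))
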